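/- arXiv:1608.05371 — 3 statements merged into one kernel-verified Lean document; each statement's English description precedes it below -/
import Mathlib

section
/- Let A be a countable index set and {G_α}_{α∈A} a collection of profinite groups such that for all α ≠ β, the groups G_α and G_β have no finite simple quotients in common. If H is a closed subgroup of G = ∏_{α∈A} G_α such that the projection of H to each G_α is all of G_α, then H = G. -/
/-- `S` is a finite simple (continuous) quotient of the profinite group `G`. -/
def IsFiniteSimpleQuotient (G : Type*) [Group G] [TopologicalSpace G]
    (S : Type*) [Group S] : Prop :=
  Finite S ∧ IsSimpleGroup S ∧
    ∃ φ : G →* S, @Continuous _ _ _ ⊥ φ ∧ Function.Surjective φ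



universe u

open Function Set Pointwise


/-- A group hom with open kernel is continuous into a discrete (⊥) topology. -/
lemma aux_continuous_of_isOpen_ker {G S : Type*} [Group G] [TopologicalSpace G]
    [IsTopologicalGroup G] [Group S] (f : G →* S) (h : IsOpen (f.ker : Set G)) :
    @Continuous _ _ _ ⊥ f := by
  letI : TopologicalSpace S := ⊥
  rw [continuous_def]
  intro s _
  have hset : f ⁻¹' s = ⋃ g : {g : G // f g ∈ s}, (fun x => (g : G) * x) '' (f.ker : Set G) := by
    ext x
    constructor
    · intro hx
      exact Set.mem_iUnion.mpr ⟨⟨x, hx⟩, ⟨1, f.ker.one_mem, mul_one x⟩⟩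
    · intro hx
      obtain ⟨⟨g, hg⟩, y, hy, rfl⟩ := Set.mem_iUnion.mp hx
      have : f y = 1 := hy
      simp only [Set.mem_preimage, map_mul, this, mul_one]
      exact hg
  rw [hset]
  exact isOpen_iUnion fun g => (Homeomorph.mulLeft (g : G)).isOpenMap _ h

/-- Every nontrivial finite group has a simple quotient. -/
lemma aux_exists_simple_quotient (Q : Type u) [Group Q] [Finite Q] [Nontrivial Q] :
    ∃ (S : Type u) (_ : Group S) (f : Q →* S), Finite S ∧ IsSimpleGroup S ∧
      Function.Surjective f := by
  haveI : Finite (Subgroup Q) :=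
    Finite.of_injective (fun M : Subgroup Q => (M : Set Q)) SetLike.coe_injective
  set s : Set (Subgroup Q) := {M | M.Normal ∧ M ≠ ⊤} with hs
  have hbot : (⊥ : Subgroup Q) ∈ s := by
    refine ⟨inferInstance, fun h => ?_⟩
    obtain ⟨x, hx⟩ := exists_ne (1 : Q)
    exact hx ((Subgroup.mem_bot).mp (h ▸ Subgroup.mem_top x))
  obtain ⟨M, hMs, hmax⟩ := Set.Finite.exists_maximalFor id s (Set.toFinite s) ⟨⊥, hbot⟩
  haveI : M.Normal := hMs.1
  obtain ⟨x, hx⟩ : ∃ x, x ∉ M := by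
    by_contra hc
    push_neg at hc
    exact hMs.2 ((Subgroup.eq_top_iff' M).mpr hc)
  haveI : Nontrivial (Q ⧸ M) :=
    ⟨⟨(x : Q ⧸ M), 1, fun h => hx ((QuotientGroup.eq_one_iff x).mp h)⟩⟩
  refine ⟨Q ⧸ M, inferInstance, QuotientGroup.mk' M, inferInstance, ?_,
    QuotientGroup.mk'_surjective M⟩
  refine { eq_bot_or_eq_top_of_normal := ?_ }
  intro N hN
  have hsurj := QuotientGroup.mk'_surjective M
  set N' : Subgroup Q := N.comap (QuotientGroup.mk' M) with hN'def
  haveI hN' : N'.Normal := hN.comap _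
  have hMN' : M ≤ N' := by
    intro m hm
    have : ((m : Q) : Q ⧸ M) = 1 := (QuotientGroup.eq_one_iff m).mpr hm
    simpa [hN'def, Subgroup.mem_comap, this] using N.one_mem
  by_cases hN'' : N' = ⊤
  · right
    rw [← Subgroup.map_comap_eq_self_of_surjective hsurj N, ← hN'def, hN'']
    exact Subgroup.map_top_of_surjective _ hsurj
  · left
    have hM : M = N' := le_antisymm hMN' (hmax ⟨hN', hN''⟩ hMN')
    rw [eq_bot_iff]
    intro y hy
    obtain ⟨q, rfl⟩ := hsurj y
    have hq : q ∈ N' := by simpa [hN'def, Subgroup.mem_comap] using hy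
    rw [← hM] at hq
    simpa [Subgroup.mem_bot] using (QuotientGroup.eq_one_iff q).mpr hq

/-- A proper closed normal subgroup of a profinite group is contained in the kernel of a
continuous surjection onto a finite simple group. -/
lemma aux_exists_fsq {Q : Type u} [Group Q] [TopologicalSpace Q] [IsTopologicalGroup Q]
    [CompactSpace Q] [T2Space Q] [TotallyDisconnectedSpace Q]
    (N : Subgroup Q) [N.Normal] (hNc : IsClosed (N : Set Q)) (hN : N ≠ ⊤) :
    ∃ (S : Type u) (_ : Group S) (f : Q →* S), Finite S ∧ IsSimpleGroup S ∧
      @Continuous _ _ _ ⊥ f ∧ Function.Surjective f ∧ N ≤ f.ker := by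
  obtain ⟨x, hx⟩ : ∃ x, x ∉ N := by
    by_contra hc
    push_neg at hc
    exact hN ((Subgroup.eq_top_iff' N).mpr hc)
  have hWopen : IsOpen ((fun v => v * x) ⁻¹' (↑N)ᶜ) :=
    hNc.isOpen_compl.preimage (continuous_id.mul continuous_const)
  have h1W : (1 : Q) ∈ (fun v => v * x) ⁻¹' (↑N)ᶜ := by
    simp only [Set.mem_preimage, one_mul]
    exact hx
  obtain ⟨V, hVclopen, h1V, hVW⟩ := compact_exists_isClopen_in_isOpen hWopen h1W
  obtain ⟨U, hU⟩ :=
    IsTopologicalGroup.exist_openNormalSubgroup_sub_clopen_nhds_of_one hVclopen h1V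
  haveI : U.toSubgroup.Normal := U.isNormal'
  set M : Subgroup Q := U.toSubgroup ⊔ N with hMdef
  have hxM : x ∉ M := by
    intro hxM
    have hx2 : x ∈ (U.toSubgroup : Set Q) * (N : Set Q) := by
      rw [← Subgroup.mul_normal]
      exact hxM
    obtain ⟨u, hu, n, hn, rfl⟩ := hx2
    have hui : u⁻¹ ∈ (U.toSubgroup : Set Q) := inv_mem hu
    have h3 : u⁻¹ * (u * n) ∈ ((N : Set Q))ᶜ := hVW (hU hui)
    exact h3 (by simpa [inv_mul_cancel_left] using hn)
  have hMopen : IsOpen (M : Set Q) :=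
    Subgroup.isOpen_mono (le_sup_left : U.toSubgroup ≤ M) U.isOpen
  haveI : Finite (Q ⧸ M) := M.quotient_finite_of_isOpen hMopen
  haveI : Nontrivial (Q ⧸ M) :=
    ⟨⟨(x : Q ⧸ M), 1, fun h => hxM ((QuotientGroup.eq_one_iff x).mp h)⟩⟩
  obtain ⟨S, instS, ψ, hSfin, hSsimp, hψ⟩ := aux_exists_simple_quotient (Q ⧸ M)
  refine ⟨S, instS, ψ.comp (QuotientGroup.mk' M), hSfin, hSsimp, ?_, ?_, ?_⟩
  · apply aux_continuous_of_isOpen_ker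
    apply Subgroup.isOpen_mono ?_ hMopen
    intro m hm
    have : ((m : Q) : Q ⧸ M) = 1 := (QuotientGroup.eq_one_iff m).mpr hm
    simp [MonoidHom.mem_ker, this]
  · exact hψ.comp (QuotientGroup.mk'_surjective M)
  · intro n hn
    have hnM : n ∈ M := (le_sup_right : N ≤ M) hn
    have : ((n : Q) : Q ⧸ M) = 1 := (QuotientGroup.eq_one_iff n).mpr hnM
    simp [MonoidHom.mem_ker, this]

/-- Transfer `IsFiniteSimpleQuotient` along a `MulEquiv` of targets. -/
lemma aux_fsq_mulEquiv {G : Type*} [Group G] [TopologicalSpace G]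
    {S T : Type*} [Group S] [Group T] (e : S ≃* T)
    (h : IsFiniteSimpleQuotient G S) : IsFiniteSimpleQuotient G T := by
  obtain ⟨hfin, hsim, φ, hc, hs⟩ := h
  haveI := hfin
  haveI := hsim
  haveI : Nontrivial T := e.symm.toEquiv.nontrivial
  refine ⟨Finite.of_equiv S e.toEquiv, IsSimpleGroup.isSimpleGroup_of_surjective e.toMonoidHom e.surjective,
    e.toMonoidHom.comp φ, ?_, e.surjective.comp hs⟩
  letI : TopologicalSpace S := ⊥
  letI : TopologicalSpace T := ⊥
  exact (continuous_bot : Continuous (e : S → T)).comp hc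

/-- A finite simple continuous quotient of a finite product is a quotient of one factor. -/
lemma aux_fsq_pi {ι : Type*} [Finite ι] (G : ι → Type*) [∀ i, Group (G i)]
    [∀ i, TopologicalSpace (G i)] {S : Type*} [Group S]
    (hfin : Finite S) (hsimp : IsSimpleGroup S) (φ : (∀ i, G i) →* S)
    (hc : @Continuous _ _ _ ⊥ φ) (hs : Function.Surjective φ) :
    ∃ i, IsFiniteSimpleQuotient (G i) S := by
  cases nonempty_fintype ι
  letI : DecidableEq ι := Classical.decEq ι
  by_cases hex : ∃ i, ((MonoidHom.mulSingle G i).range.map φ) = ⊤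
  · obtain ⟨i, hi⟩ := hex
    refine ⟨i, hfin, hsimp, φ.comp (MonoidHom.mulSingle G i), ?_, ?_⟩
    · letI : TopologicalSpace S := ⊥
      exact hc.comp (continuous_mulSingle i)
    · rw [← MonoidHom.range_eq_top, MonoidHom.range_comp]
      exact hi
  · exfalso
    push_neg at hex
    have hnormal : ∀ i, ((MonoidHom.mulSingle G i).range).Normal := by
      intro i
      constructor
      rintro n ⟨y, rfl⟩ g
      refine ⟨g i * y * (g i)⁻¹, funext fun j => ?_⟩
      by_cases hj : j = i
      · subst hj
        simp [Pi.mulSingle_eq_same]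
      · simp [Pi.mulSingle_eq_of_ne hj]
    have hbot : ∀ i, ((MonoidHom.mulSingle G i).range.map φ) = ⊥ := by
      intro i
      haveI := hsimp
      rcases IsSimpleGroup.eq_bot_or_eq_top_of_normal _ ((hnormal i).map φ hs) with h | h
      · exact h
      · exact absurd h (hex i)
    have htriv : ∀ x, φ x = 1 := by
      intro x
      have hx := Finset.noncommProd_mulSingle x
      rw [← hx]
      refine (Finset.map_noncommProd _ _ _ φ).trans ?_
      refine (Finset.noncommProd_eq_pow_card _ _ _ (1 : S) ?_).trans (one_pow _)
      intro j _
      have hmem : φ (Pi.mulSingle j (x j)) ∈ (MonoidHom.mulSingle G j).range.map φ :=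
        ⟨Pi.mulSingle j (x j), ⟨x j, rfl⟩, rfl⟩
      rw [hbot j] at hmem
      simpa using hmem
    haveI := hsimp
    obtain ⟨s', hs'⟩ := exists_ne (1 : S)
    obtain ⟨x, rfl⟩ := hs s'
    exact hs' (htriv x)

/-- Goursat-type lemma for two profinite groups with no common finite simple quotient. -/
lemma aux_goursat {Q₁ Q₂ : Type*}
    [Group Q₁] [TopologicalSpace Q₁] [IsTopologicalGroup Q₁] [CompactSpace Q₁] [T2Space Q₁]
    [TotallyDisconnectedSpace Q₁]
    [Group Q₂] [TopologicalSpace Q₂] [IsTopologicalGroup Q₂] [CompactSpace Q₂] [T2Space Q₂]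
    [TotallyDisconnectedSpace Q₂]
    (hdisj : ∀ (S : Type) (_ : Group S),
      ¬(IsFiniteSimpleQuotient Q₁ S ∧ IsFiniteSimpleQuotient Q₂ S))
    (K : Subgroup (Q₁ × Q₂)) (hK : IsClosed (K : Set (Q₁ × Q₂)))
    (h1 : K.map (MonoidHom.fst Q₁ Q₂) = ⊤) (h2 : K.map (MonoidHom.snd Q₁ Q₂) = ⊤) :
    K = ⊤ := by
  have h1' : ∀ a : Q₁, ∃ b : Q₂, (a, b) ∈ K := by
    intro a
    have : a ∈ K.map (MonoidHom.fst Q₁ Q₂) := h1 ▸ Subgroup.mem_top a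
    obtain ⟨⟨a', b⟩, hk, rfl⟩ := this
    exact ⟨b, hk⟩
  have h2' : ∀ b : Q₂, ∃ a : Q₁, (a, b) ∈ K := by
    intro b
    have : b ∈ K.map (MonoidHom.snd Q₁ Q₂) := h2 ▸ Subgroup.mem_top b
    obtain ⟨⟨a, b'⟩, hk, rfl⟩ := this
    exact ⟨a, hk⟩
  set N₂ : Subgroup Q₂ := K.comap (MonoidHom.inr Q₁ Q₂) with hN₂def
  have hN₂mem : ∀ b : Q₂, b ∈ N₂ ↔ ((1 : Q₁), b) ∈ K := fun b => Iff.rfl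
  by_cases hN : N₂ = ⊤
  · refine (Subgroup.eq_top_iff' K).mpr fun p => ?_
    obtain ⟨a, b⟩ := p
    obtain ⟨b', hb'⟩ := h1' a
    have h1b : ((1 : Q₁), b'⁻¹ * b) ∈ K := (hN₂mem _).mp (hN ▸ Subgroup.mem_top _)
    have := mul_mem hb' h1b
    simpa [mul_assoc] using this
  · exfalso
    haveI : N₂.Normal := by
      constructor
      intro n hn g
      obtain ⟨a, ha⟩ := h2' g
      have := mul_mem (mul_mem ha ((hN₂mem n).mp hn)) (inv_mem ha)
      simpa [hN₂mem] using this
    have hN₂closed : IsClosed (N₂ : Set Q₂) := by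
      have : (N₂ : Set Q₂) = (fun b => ((1 : Q₁), b)) ⁻¹' (K : Set (Q₁ × Q₂)) := rfl
      rw [this]
      exact hK.preimage (continuous_const.prodMk continuous_id)
    obtain ⟨S, instS, f, hSfin, hSsimp, hfc, hfs, hNker⟩ := aux_exists_fsq N₂ hN₂closed hN
    let p : K →* Q₁ := (MonoidHom.fst Q₁ Q₂).comp K.subtype
    have hp : Function.Surjective p := by
      intro a
      obtain ⟨b, hb⟩ := h1' a
      exact ⟨⟨(a, b), hb⟩, rfl⟩
    let ψ : K →* S := f.comp ((MonoidHom.snd Q₁ Q₂).comp K.subtype)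
    have hker : p.ker ≤ ψ.ker := by
      intro k hk
      have hk1 : (k : Q₁ × Q₂).1 = 1 := hk
      have hmem : ((k : Q₁ × Q₂).2) ∈ N₂ := by
        rw [hN₂mem, ← hk1, Prod.mk.eta]
        exact k.2
      exact hNker hmem
    let φ : Q₁ →* S :=
      p.liftOfRightInverse (Function.surjInv hp) (Function.rightInverse_surjInv hp) ⟨ψ, hker⟩
    have hφp : ∀ k : K, φ (p k) = ψ k := fun k =>
      p.liftOfRightInverse_comp_apply _ _ ⟨ψ, hker⟩ k
    have hφs : Function.Surjective φ := by
      intro s'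
      obtain ⟨b, hb⟩ := hfs s'
      obtain ⟨a, ha⟩ := h2' b
      refine ⟨a, ?_⟩
      have h := hφp ⟨(a, b), ha⟩
      exact h.trans hb
    have hkerset : (φ.ker : Set Q₁) =
        Prod.fst '' ((K : Set (Q₁ × Q₂)) ∩ (Set.univ ×ˢ (f ⁻¹' {1}))) := by
      ext a
      constructor
      · intro ha
        obtain ⟨k, hk⟩ := hp a
        have h2k : ψ k = 1 := by rw [← hφp k, hk]; exact ha
        exact ⟨(k : Q₁ × Q₂), ⟨k.2, ⟨Set.mem_univ _, h2k⟩⟩, hk⟩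
      · rintro ⟨⟨a', b⟩, ⟨hab, -, hb1⟩, rfl⟩
        show φ a' = 1
        have h := hφp ⟨(a', b), hab⟩
        exact h.trans hb1
    have hkerclosed : IsClosed (φ.ker : Set Q₁) := by
      rw [hkerset]
      have hKcomp : IsCompact (K : Set (Q₁ × Q₂)) := hK.isCompact
      have hclosed2 : IsClosed (Set.univ ×ˢ (f ⁻¹' {1}) : Set (Q₁ × Q₂)) := by
        refine IsClosed.prod isClosed_univ ?_
        letI : TopologicalSpace S := ⊥
        haveI : DiscreteTopology S := ⟨rfl⟩
        exact (isClosed_discrete {1}).preimage hfc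
      exact ((hKcomp.inter_right hclosed2).image continuous_fst).isClosed
    haveI : Finite (Q₁ ⧸ φ.ker) :=
      Finite.of_equiv S (QuotientGroup.quotientKerEquivOfSurjective φ hφs).symm.toEquiv
    haveI : φ.ker.FiniteIndex := φ.ker.finiteIndex_of_finite_quotient
    have hkeropen : IsOpen (φ.ker : Set Q₁) :=
      Subgroup.isOpen_of_isClosed_of_finiteIndex _ hkerclosed
    have hφc := aux_continuous_of_isOpen_ker φ hkeropen
    haveI := hSfin
    haveI : Small.{0} S := inferInstance
    let e : Shrink.{0} S ≃* S := Shrink.mulEquiv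
    exact hdisj (Shrink.{0} S) inferInstance
      ⟨aux_fsq_mulEquiv e.symm ⟨hSfin, hSsimp, φ, hφc, hφs⟩,
       aux_fsq_mulEquiv e.symm ⟨hSfin, hSsimp, f, hfc, hfs⟩⟩

/-- Restriction of a product of groups to a finite set of coordinates. -/
def auxResHom {A : Type*} (G : A → Type*) [∀ α, Group (G α)] (F : Finset A) :
    (∀ α, G α) →* ((β : F) → G β) :=
  MonoidHom.mk' (fun x (β : F) => x β) (fun _ _ => rfl)

/-- Splitting off the coordinate `a` from a product over `insert a F`. -/
def auxInsHom {A : Type*} [DecidableEq A] (G : A → Type*) [∀ α, Group (G α)] (a : A)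
    (F : Finset A) :
    ((β : (insert a F : Finset A)) → G β) →* (G a × ((β : F) → G β)) :=
  (Pi.evalMonoidHom (fun β : (insert a F : Finset A) => G β)
      ⟨a, Finset.mem_insert_self a F⟩).prod
    (MonoidHom.mk' (fun x (β : F) => x ⟨β, Finset.mem_insert_of_mem β.2⟩) (fun _ _ => rfl))

/-- Goursat-type lemma: if `{G_α}_{α ∈ A}` is a countable collection of profinite
groups no two of which share a finite simple quotient, and `H` is a closed
subgroup of `∏ G_α` projecting onto every factor, then `H = ∏ G_α`. -/
theorem closed_subgroup_eq_top_of_surjective_projections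
    {A : Type*} [Countable A] (G : A → Type*) [∀ α, Group (G α)]
    [∀ α, TopologicalSpace (G α)] [∀ α, IsTopologicalGroup (G α)]
    [∀ α, CompactSpace (G α)] [∀ α, T2Space (G α)]
    [∀ α, TotallyDisconnectedSpace (G α)]
    (hdisj : ∀ α β : A, α ≠ β → ∀ (S : Type) [Group S],
      ¬(IsFiniteSimpleQuotient (G α) S ∧ IsFiniteSimpleQuotient (G β) S))
    (H : Subgroup (∀ α, G α)) (hH : IsClosed (H : Set (∀ α, G α)))
    (hproj : ∀ α, Subgroup.map (Pi.evalMonoidHom G α) H = ⊤) :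
    H = ⊤ := by
  classical
  have hHcomp : IsCompact (H : Set (∀ α, G α)) := hH.isCompact
  have hrescont : ∀ F : Finset A, Continuous (auxResHom G F) :=
    fun F => continuous_pi fun β => continuous_apply (β : A)
  -- Step 1: every finite restriction of `H` is everything.
  have step1 : ∀ F : Finset A, Subgroup.map (auxResHom G F) H = ⊤ := by
    intro F
    induction F using Finset.induction_on with
    | empty =>
      haveI : Subsingleton ((β : (∅ : Finset A)) → G β) :=
        ⟨fun x y => funext fun β => absurd β.2 (Finset.notMem_empty _)⟩
      refine (Subgroup.eq_top_iff' _).mpr fun x => ?_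
      rw [Subsingleton.elim x 1]
      exact Subgroup.one_mem _
    | @insert a s ha ih =>
      set j := auxInsHom G a s with hjdef
      have hjinj : Function.Injective j := by
        intro x y hxy
        funext β
        obtain ⟨β, hβ⟩ := β
        rcases Finset.mem_insert.mp hβ with rfl | hmem
        · exact congrArg Prod.fst hxy
        · exact congrFun (congrArg Prod.snd hxy) ⟨β, hmem⟩
      have hjsurj : Function.Surjective j := by
        rintro ⟨g, y⟩
        refine ⟨fun β => if h : (β : A) ∈ s then y ⟨β, h⟩ else
          cast (congrArg G (by
            rcases Finset.mem_insert.mp β.2 with h' | h'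
            · exact h'.symm
            · exact absurd h' h)) g, ?_⟩
        refine Prod.ext ?_ ?_
        · show dite (a ∈ s) _ _ = g
          rw [dif_neg ha]
          rfl
        · funext β
          show dite ((β : A) ∈ s) _ _ = y β
          rw [dif_pos β.2]
      have hjcont : Continuous j :=
        (continuous_apply _).prodMk (continuous_pi fun β => continuous_apply _)
      -- the transported subgroup
      set K : Subgroup (G a × ((β : s) → G β)) :=
        (H.map (auxResHom G (insert a s))).map j with hKdef
      have hKclosed : IsClosed (K : Set (G a × ((β : s) → G β))) := by
        rw [hKdef, Subgroup.coe_map, Subgroup.coe_map]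
        exact (((hHcomp.image (hrescont _)).image hjcont)).isClosed
      have hKfst : K.map (MonoidHom.fst _ _) = ⊤ := by
        rw [hKdef, Subgroup.map_map, Subgroup.map_map]
        have : ((MonoidHom.fst (G a) ((β : s) → G β)).comp j).comp
            (auxResHom G (insert a s)) = Pi.evalMonoidHom G a :=
          MonoidHom.ext fun x => rfl
        rw [this]
        exact hproj a
      have hKsnd : K.map (MonoidHom.snd _ _) = ⊤ := by
        rw [hKdef, Subgroup.map_map, Subgroup.map_map]
        have : ((MonoidHom.snd (G a) ((β : s) → G β)).comp j).comp
            (auxResHom G (insert a s)) = auxResHom G s :=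
          MonoidHom.ext fun x => rfl
        rw [this]
        exact ih
      have hdisj' : ∀ (S : Type) (_ : Group S),
          ¬(IsFiniteSimpleQuotient (G a) S ∧
            IsFiniteSimpleQuotient ((β : s) → G β) S) := by
        rintro S iS ⟨hS1, hS2⟩
        obtain ⟨hfin, hsimp, φ, hφc, hφs⟩ := hS2
        obtain ⟨β, hβ⟩ := aux_fsq_pi (fun β : s => G β) hfin hsimp φ hφc hφs
        exact hdisj a β (fun h => ha (by rw [h]; exact β.2)) S ⟨hS1, hβ⟩
      have hKtop : K = ⊤ := aux_goursat hdisj' K hKclosed hKfst hKsnd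
      apply Subgroup.map_injective hjinj
      rw [← hKdef, hKtop]
      rw [← MonoidHom.range_eq_map]
      exact (MonoidHom.range_eq_top.mpr hjsurj).symm
  -- Step 2: compactness argument.
  refine (Subgroup.eq_top_iff' H).mpr fun g => ?_
  set C : Finset A → Set (∀ α, G α) :=
    fun F => (H : Set (∀ α, G α)) ∩ ⋂ (β : F), {x | x (β : A) = g (β : A)} with hCdef
  have hCclosed : ∀ F, IsClosed (C F) :=
    fun F => hH.inter (isClosed_iInter fun β =>
      isClosed_eq (continuous_apply _) continuous_const)
  have hCnonempty : ∀ F, (C F).Nonempty := by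
    intro F
    have : auxResHom G F g ∈ Subgroup.map (auxResHom G F) H :=
      (step1 F) ▸ Subgroup.mem_top _
    obtain ⟨h, hh, hres⟩ := this
    exact ⟨h, hh, Set.mem_iInter.mpr fun β => congrFun hres β⟩
  have hCdirected : Directed (· ⊇ ·) C := by
    intro F₁ F₂
    refine ⟨F₁ ∪ F₂, fun x hx => ⟨hx.1, ?_⟩, fun x hx => ⟨hx.1, ?_⟩⟩
    · exact Set.mem_iInter.mpr fun β =>
        Set.mem_iInter.mp hx.2 ⟨β, Finset.mem_union_left _ β.2⟩
    · exact Set.mem_iInter.mpr fun β =>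
        Set.mem_iInter.mp hx.2 ⟨β, Finset.mem_union_right _ β.2⟩
  obtain ⟨y, hy⟩ := IsCompact.nonempty_iInter_of_directed_nonempty_isCompact_isClosed
    C hCdirected hCnonempty (fun F => (hCclosed F).isCompact) hCclosed
  have hyH : y ∈ H := (Set.mem_iInter.mp hy ∅).1
  have hyg : y = g := by
    funext α
    exact Set.mem_iInter.mp
      (Set.mem_iInter.mp hy {α}).2 ⟨α, Finset.mem_singleton_self α⟩
  rw [← hyg]
  exact hyH
end

section
/- For all g ≥ 1, the commutator subalgebra [sp_{2g}(ℤ/4ℤ), sp_{2g}(ℤ/4ℤ)] contains 2·sp_{2g}(ℤ/2ℤ), i.e., every matrix of the form 2M with M ∈ sp_{2g}(ℤ/4ℤ) lies in the span of brackets. -/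
open Matrix

/-- The standard symplectic form `Ω = [[0, id],[−id, 0]]`. -/
def Omega (g : ℕ) (R : Type*) [CommRing R] :
    Matrix (Fin g ⊕ Fin g) (Fin g ⊕ Fin g) R :=
  Matrix.fromBlocks 0 1 (-1) 0

/-- The symplectic Lie algebra `sp_{2g}(R) = {M : MᵀΩ + ΩM = 0}`. -/
def sp (g : ℕ) (R : Type*) [CommRing R] :
    Submodule R (Matrix (Fin g ⊕ Fin g) (Fin g ⊕ Fin g) R) where
  carrier := {M | Mᵀ * Omega g R + Omega g R * M = 0}
  add_mem' := by
    intro a b ha hb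
    simp only [Set.mem_setOf_eq] at *
    rw [Matrix.transpose_add, Matrix.add_mul, Matrix.mul_add]
    rw [add_add_add_comm, ha, hb, add_zero]
  zero_mem' := by simp
  smul_mem' := by
    intro c a ha
    simp only [Set.mem_setOf_eq] at *
    rw [Matrix.transpose_smul, Matrix.smul_mul, Matrix.mul_smul, ← smul_add, ha, smul_zero]

lemma stdBasisMatrix_transpose' {n : Type*} [DecidableEq n] {R : Type*} [CommRing R]
    (i j : n) (a : R) : (Matrix.single i j a)ᵀ = Matrix.single j i a := by
  ext k l
  simp [Matrix.single, and_comm]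

/-- Membership in `sp` via blocks. -/
lemma fromBlocks_mem_sp (g : ℕ) (R : Type*) [CommRing R]
    (A B C E : Matrix (Fin g) (Fin g) R)
    (hB : Bᵀ = B) (hC : Cᵀ = C) (hE : E = -Aᵀ) :
    Matrix.fromBlocks A B C E ∈ sp g R := by
  show (Matrix.fromBlocks A B C E)ᵀ * Omega g R + Omega g R * Matrix.fromBlocks A B C E = 0
  rw [Omega, Matrix.fromBlocks_transpose, Matrix.fromBlocks_multiply,
    Matrix.fromBlocks_multiply, Matrix.fromBlocks_add, hE]
  rw [← Matrix.fromBlocks_zero]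
  congr 1 <;>
    simp [hB, hC, Matrix.transpose_neg, Matrix.transpose_transpose] <;>
    ext a b <;> simp <;> ring

/-- The linear map sending `A` to the block-diagonal symplectic matrix
`[[A, 0], [0, -Aᵀ]]`. -/
def Ldiag (g : ℕ) (R : Type*) [CommRing R] :
    Matrix (Fin g) (Fin g) R →ₗ[R] Matrix (Fin g ⊕ Fin g) (Fin g ⊕ Fin g) R where
  toFun A := Matrix.fromBlocks A 0 0 (-Aᵀ)
  map_add' A B := by
    ext (i | i) (j | j) <;> simp [Matrix.fromBlocks] <;> ring
  map_smul' c A := by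
    ext (i | i) (j | j) <;> simp [Matrix.fromBlocks]

lemma offdiag_bracket (g : ℕ) (R : Type*) [CommRing R]
    (B C : Matrix (Fin g) (Fin g) R) :
    Matrix.fromBlocks 0 B 0 0 * Matrix.fromBlocks 0 0 C 0 -
      Matrix.fromBlocks 0 0 C 0 * Matrix.fromBlocks 0 B 0 0 =
      Matrix.fromBlocks (B * C) 0 0 (-(C * B)) := by
  rw [Matrix.fromBlocks_multiply, Matrix.fromBlocks_multiply]
  ext (a | a) (b | b) <;> simp [Matrix.fromBlocks]

/-- Each elementary block-diagonal symplectic matrix is an actual bracket. -/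
lemma Ldiag_stdBasis_mem (g : ℕ) (i j : Fin g) :
    Ldiag g (ZMod 4) (Matrix.single i j 1) ∈
      {X | ∃ A ∈ sp g (ZMod 4), ∃ B ∈ sp g (ZMod 4), X = A * B - B * A} := by
  classical
  by_cases hij : i = j
  · subst hij
    refine ⟨Matrix.fromBlocks 0 (Matrix.single i i 1) 0 0, ?_,
      Matrix.fromBlocks 0 0 (Matrix.single i i 1) 0, ?_, ?_⟩
    · exact fromBlocks_mem_sp g _ _ _ _ _ (by rw [stdBasisMatrix_transpose'])
        (by simp) (by simp)
    · exact fromBlocks_mem_sp g _ _ _ _ _ (by simp)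
        (by rw [stdBasisMatrix_transpose']) (by simp)
    · rw [offdiag_bracket, Matrix.single_mul_single_same, one_mul]
      show Matrix.fromBlocks _ 0 0 _ = Matrix.fromBlocks _ 0 0 _
      congr 1
      rw [stdBasisMatrix_transpose']
  · refine ⟨Matrix.fromBlocks 0 (Matrix.single i i 1) 0 0, ?_,
      Matrix.fromBlocks 0 0 (Matrix.single i j 1 + Matrix.single j i 1) 0, ?_, ?_⟩
    · exact fromBlocks_mem_sp g _ _ _ _ _ (by rw [stdBasisMatrix_transpose'])
        (by simp) (by simp)
    · exact fromBlocks_mem_sp g _ _ _ _ _ (by simp)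
        (by rw [Matrix.transpose_add, stdBasisMatrix_transpose', stdBasisMatrix_transpose',
          add_comm]) (by simp)
    · rw [offdiag_bracket]
      have h1 : Matrix.single i i (1 : ZMod 4) *
          (Matrix.single i j 1 + Matrix.single j i 1) = Matrix.single i j 1 := by
        rw [mul_add, Matrix.single_mul_single_same,
          Matrix.single_mul_single_of_ne (i := i) (j := i) (k := j) (c := 1) (h := hij) (d := 1), one_mul, add_zero]
      have h2 : (Matrix.single i j (1 : ZMod 4) + Matrix.single j i 1) *
          Matrix.single i i 1 = Matrix.single j i 1 := by
        rw [add_mul, Matrix.single_mul_single_same,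
          Matrix.single_mul_single_of_ne (i := i) (j := j) (k := i) (c := 1) (h := Ne.symm hij) (d := 1), one_mul, zero_add]
      rw [h1, h2]
      show Matrix.fromBlocks _ 0 0 _ = Matrix.fromBlocks _ 0 0 _
      congr 1
      rw [stdBasisMatrix_transpose']

/-- Every block-diagonal symplectic matrix is in the span of brackets. -/
lemma Ldiag_mem_span (g : ℕ) (A : Matrix (Fin g) (Fin g) (ZMod 4)) :
    Ldiag g (ZMod 4) A ∈ Submodule.span (ZMod 4)
      {X | ∃ A ∈ sp g (ZMod 4), ∃ B ∈ sp g (ZMod 4), X = A * B - B * A} := by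
  classical
  rw [Matrix.matrix_eq_sum_single A]
  rw [map_sum]
  refine Submodule.sum_mem _ fun i _ => ?_
  rw [map_sum]
  refine Submodule.sum_mem _ fun j _ => ?_
  have : Matrix.single i j (A i j) = (A i j) • Matrix.single i j 1 := by
    rw [Matrix.smul_single, smul_eq_mul, mul_one]
  rw [this, LinearMap.map_smul]
  exact Submodule.smul_mem _ _ (Submodule.subset_span (Ldiag_stdBasis_mem g i j))

/-- For all `g ≥ 1`, the commutator subalgebra of `sp_{2g}(ℤ/4ℤ)` contains
`2·sp_{2g}(ℤ/2ℤ)`, i.e. every matrix `2M` with `M ∈ sp_{2g}(ℤ/4ℤ)` lies in the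
span of brackets. -/
theorem two_smul_sp_subset_commutator_span (g : ℕ) (hg : 1 ≤ g) :
    ∀ M ∈ sp g (ZMod 4),
      (2 : ZMod 4) • M ∈ Submodule.span (ZMod 4)
        {X | ∃ A ∈ sp g (ZMod 4), ∃ B ∈ sp g (ZMod 4), X = A * B - B * A} := by
  intro M hM
  classical
  set D : Matrix (Fin g ⊕ Fin g) (Fin g ⊕ Fin g) (ZMod 4) :=
    Matrix.fromBlocks 1 0 0 (-1) with hD
  have hDsp : D ∈ sp g (ZMod 4) :=
    fromBlocks_mem_sp g _ _ _ _ _ (by simp) (by simp) (by simp)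
  set A := M.toBlocks₁₁ with hA
  set B := M.toBlocks₁₂ with hB
  set C := M.toBlocks₂₁ with hC
  set E := M.toBlocks₂₂ with hE
  have hMblocks : M = Matrix.fromBlocks A B C E := (Matrix.fromBlocks_toBlocks M).symm
  -- extract the sp relation on blocks: E = -Aᵀ
  have hM' : (Matrix.fromBlocks A B C E)ᵀ * Omega g (ZMod 4) +
      Omega g (ZMod 4) * Matrix.fromBlocks A B C E = 0 := by
    rw [← hMblocks]; exact hM
  rw [Omega, Matrix.fromBlocks_transpose, Matrix.fromBlocks_multiply,
    Matrix.fromBlocks_multiply, Matrix.fromBlocks_add] at hM'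
  have h12 := congrArg Matrix.toBlocks₁₂ hM'
  simp only [Matrix.toBlocks_fromBlocks₁₂] at h12
  have hzb : Matrix.toBlocks₁₂ (0 : Matrix (Fin g ⊕ Fin g) (Fin g ⊕ Fin g) (ZMod 4)) =
      (0 : Matrix (Fin g) (Fin g) (ZMod 4)) := by
    ext a b; simp [Matrix.toBlocks₁₂]
  rw [hzb] at h12
  have h12' : Aᵀ + E = 0 := by
    have := h12
    simp only [Matrix.mul_one, Matrix.mul_zero, Matrix.zero_mul, Matrix.one_mul,
      add_zero, zero_add] at this
    exact this
  have hE' : E = -Aᵀ := eq_neg_of_add_eq_zero_right h12'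
  have h4 : (4 : ZMod 4) = 0 := rfl
  -- key identity: 2 • M = (D*M - M*D) + 2 • Ldiag A
  have hkey : (2 : ZMod 4) • M = (D * M - M * D) + (2 : ZMod 4) • Ldiag g (ZMod 4) A := by
    rw [hMblocks, hD]
    show _ = _ + (2 : ZMod 4) • Matrix.fromBlocks A 0 0 (-Aᵀ)
    rw [Matrix.fromBlocks_multiply, Matrix.fromBlocks_multiply, hE']
    ext (a | a) (b | b) <;>
      simp [Matrix.fromBlocks, Matrix.smul_apply, smul_eq_mul] <;>
      first
        | ring1
        | linear_combination (C a b) * h4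
  rw [hkey]
  refine Submodule.add_mem _ ?_ ?_
  · exact Submodule.subset_span ⟨D, hDsp, M, hM, rfl⟩
  · exact Submodule.smul_mem _ _ (Ldiag_mem_span g A)
end

section
/- Let A/K be an abelian surface over a number field with End_{K̄}(A) = ℤ, and let v be a place of good reduction such that the splitting field F(v) of the Frobenius characteristic polynomial f_v(x) has Galois group D_4 over ℚ. Then for any three distinct eigenvalues x, y, z of Frob_v (roots of f_v), we have y² ≠ xz. -/
open Polynomial IntermediateField

/-- (Lemma on Frobenius eigenvalues of an abelian surface.) Let `f ∈ ℤ[x]` be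
monic of degree `4` (the characteristic polynomial of Frobenius at a place `v`
of good reduction of an abelian surface `A/K` with `End_{K̄}(A) = ℤ`), with
`q = q_v > 0`, such that `f` is irreducible over `ℚ`, all complex roots of `f`
have absolute value `√q` (Weil), and the Galois group of the splitting field
of `f` over `ℚ` is the dihedral group `D₄` of order `8`. Then any three
pairwise distinct roots `x, y, z` of `f` satisfy `y² ≠ xz`. -/
theorem frobenius_eigenvalues_no_relation
    (q : ℕ) (hq : 0 < q) (f : Polynomial ℤ) (hmonic : f.Monic)
    (hdeg : f.natDegree = 4)
    (hirr : Irreducible (f.map (Int.castRingHom ℚ)))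
    (habs : ∀ z : ℂ, Polynomial.aeval z f = 0 → ‖z‖ = Real.sqrt q)
    (hgal : Nonempty ((f.map (Int.castRingHom ℚ)).Gal ≃* DihedralGroup 4)) :
    ∀ x y z : ℂ, Polynomial.aeval x f = 0 → Polynomial.aeval y f = 0 →
      Polynomial.aeval z f = 0 → x ≠ y → y ≠ z → x ≠ z → y ^ 2 ≠ x * z := by
  intro x y z hx hy hz hxy hyz hxz hrel
  classical
  set g : Polynomial ℚ := f.map (Int.castRingHom ℚ) with hg
  have hgmonic : g.Monic := hmonic.map _
  have hgdeg : g.natDegree = 4 := by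
    rw [hg, Polynomial.natDegree_map_eq_of_injective ((Int.castRingHom ℚ).injective_int)]
    exact hdeg
  have haev : ∀ r : ℂ, Polynomial.aeval r f = 0 → Polynomial.aeval r g = 0 := by
    intro r hr
    rw [hg, show (Int.castRingHom ℚ) = algebraMap ℤ ℚ from rfl, aeval_map_algebraMap]
    exact hr
  have hqR : (0:ℝ) < q := by exact_mod_cast hq
  have hne0 : ∀ r : ℂ, Polynomial.aeval r f = 0 → r ≠ 0 := by
    intro r hr h0
    have h1 := habs r hr
    rw [h0, norm_zero] at h1
    have := Real.sqrt_pos.mpr hqR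
    rw [← h1] at this
    exact lt_irrefl _ this
  have hconjmul : ∀ r : ℂ, Polynomial.aeval r f = 0 → r * (starRingEnd ℂ) r = (q:ℂ) := by
    intro r hr
    have h1 : Complex.normSq r = (q:ℝ) := by
      rw [← Complex.sq_norm, habs r hr, Real.sq_sqrt hqR.le]
    rw [Complex.mul_conj, h1]
    norm_cast
  have hconjroot : ∀ r : ℂ, Polynomial.aeval r f = 0 →
      Polynomial.aeval ((starRingEnd ℂ) r) f = 0 := by
    intro r hr
    have key : (starRingEnd ℂ) (Polynomial.aeval r f) =
        Polynomial.aeval ((starRingEnd ℂ) r) f := by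
      rw [Polynomial.aeval_def, Polynomial.aeval_def, Polynomial.hom_eval₂]
      congr 1
      exact Subsingleton.elim _ _
    rw [← key, hr, map_zero]
  have hsqne : ∀ r : ℂ, Polynomial.aeval r f = 0 → r ^ 2 ≠ (q:ℂ) := by
    intro r hr h2
    have hmin : minpoly ℚ r = g := (minpoly.eq_of_irreducible_of_monic hirr (haev r hr) hgmonic).symm
    have hdvd : minpoly ℚ r ∣ (Polynomial.X ^ 2 - Polynomial.C (q:ℚ)) := by
      apply minpoly.dvd
      simp only [map_sub, map_pow, Polynomial.aeval_X, Polynomial.aeval_C]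
      rw [show (algebraMap ℚ ℂ) (q:ℚ) = (q:ℂ) by push_cast; ring, h2, sub_self]
    have hne2 : (Polynomial.X ^ 2 - Polynomial.C (q:ℚ)) ≠ 0 := by
      intro h
      have h4 := Polynomial.natDegree_X_pow_sub_C (n := 2) (r := (q:ℚ))
      rw [h] at h4
      simp at h4
    have hle := Polynomial.natDegree_le_of_dvd hdvd hne2
    rw [hmin, hgdeg, Polynomial.natDegree_X_pow_sub_C] at hle
    omega
  -- no five pairwise distinct roots
  have hfive : ∀ a b c d e : ℂ, Polynomial.aeval a f = 0 → Polynomial.aeval b f = 0 →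
      Polynomial.aeval c f = 0 → Polynomial.aeval d f = 0 → Polynomial.aeval e f = 0 →
      a ≠ b → a ≠ c → a ≠ d → a ≠ e → b ≠ c → b ≠ d → b ≠ e → c ≠ d → c ≠ e → d ≠ e →
      False := by
    intro a b c d e ha hb hc hd he hab hac had hae hbc hbd hbe hcd hce hde
    set F : Polynomial ℂ := f.map (Int.castRingHom ℂ) with hF
    have hFm : F.Monic := hmonic.map _
    have hF0 : F ≠ 0 := hFm.ne_zero
    have hFdeg : F.natDegree = 4 := by
      rw [hF, Polynomial.natDegree_map_eq_of_injective ((Int.castRingHom ℂ).injective_int)]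
      exact hdeg
    have hmem : ∀ r : ℂ, Polynomial.aeval r f = 0 → r ∈ F.roots := by
      intro r hr
      rw [Polynomial.mem_roots hF0]
      rw [Polynomial.IsRoot, hF, Polynomial.eval_map]
      rw [Polynomial.aeval_def] at hr
      exact hr
    have hsub : ({a, b, c, d, e} : Finset ℂ) ⊆ F.roots.toFinset := by
      intro t ht
      rw [Multiset.mem_toFinset]
      simp only [Finset.mem_insert, Finset.mem_singleton] at ht
      rcases ht with h | h | h | h | h <;> rw [h]
      · exact hmem a ha
      · exact hmem b hb
      · exact hmem c hc
      · exact hmem d hd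
      · exact hmem e he
    have hcard : ({a, b, c, d, e} : Finset ℂ).card = 5 := by
      rw [Finset.card_insert_of_notMem (by simp [hab, hac, had, hae]),
        Finset.card_insert_of_notMem (by simp [hbc, hbd, hbe]),
        Finset.card_insert_of_notMem (by simp [hcd, hce]),
        Finset.card_insert_of_notMem (by simp [hde]),
        Finset.card_singleton]
    have h1 := Finset.card_le_card hsub
    have h2 := Multiset.toFinset_card_le F.roots
    have h3 := Polynomial.card_roots' F
    rw [hFdeg] at h3
    omega
  -- the conjugate of a root r satisfies conj r = q / r and is a root distinct from r
  have hconj_ne : ∀ r : ℂ, Polynomial.aeval r f = 0 → (starRingEnd ℂ) r ≠ r := by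
    intro r hr h
    apply hsqne r hr
    rw [sq, ← (by rw [h] : r * (starRingEnd ℂ) r = r * r)]
    exact hconjmul r hr
  -- step: conj y ∈ {x, z}
  have hyin : (starRingEnd ℂ) y = x ∨ (starRingEnd ℂ) y = z := by
    by_contra hcon
    push_neg at hcon
    obtain ⟨h1, h2⟩ := hcon
    have hybar := hconjroot y hy
    have hxbar := hconjroot x hx
    have hxbar_ne_x : (starRingEnd ℂ) x ≠ x := hconj_ne x hx
    have hxbar_ne_y : (starRingEnd ℂ) x ≠ y := by
      intro h
      apply h1
      rw [← h, Complex.conj_conj]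
    have hxbar_ne_cy : (starRingEnd ℂ) x ≠ (starRingEnd ℂ) y := by
      intro h
      exact hxy ((starRingEnd ℂ).injective h)
    have hxbar_eq_z : (starRingEnd ℂ) x = z := by
      by_contra h3
      exact hfive x y z ((starRingEnd ℂ) y) ((starRingEnd ℂ) x) hx hy hz hybar hxbar
        hxy hxz (Ne.symm h1) (Ne.symm hxbar_ne_x) hyz (Ne.symm (hconj_ne y hy))
        (Ne.symm hxbar_ne_y) (Ne.symm h2) (Ne.symm h3) (Ne.symm hxbar_ne_cy).symm.symm
    apply hsqne y hy
    rw [hrel, ← hxbar_eq_z]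
    exact hconjmul x hx
  -- all roots lie in ℚ⟮y⟯
  have hyne0 : y ≠ 0 := hne0 y hy
  have hymem : y ∈ ℚ⟮y⟯ := IntermediateField.mem_adjoin_simple_self ℚ y
  have hqmem : (q:ℂ) ∈ ℚ⟮y⟯ := IntermediateField.natCast_mem ℚ⟮y⟯ q
  have hconjval : ∀ r : ℂ, Polynomial.aeval r f = 0 → r = (q:ℂ) / (starRingEnd ℂ) r := by
    intro r hr
    have h1 := hconjmul r hr
    have h2 : (starRingEnd ℂ) r ≠ 0 := fun h => hne0 r hr (by
      simpa using congrArg (starRingEnd ℂ) h)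
    field_simp
    rw [mul_comm] at h1
    linear_combination h1
  have hxmem : x ∈ ℚ⟮y⟯ ∧ z ∈ ℚ⟮y⟯ := by
    have hxne0 : x ≠ 0 := hne0 x hx
    have hzne0 : z ≠ 0 := hne0 z hz
    rcases hyin with h | h
    · have hx' : x = (q:ℂ) / y := by
        have hm := hconjmul y hy
        rw [h] at hm
        field_simp
        linear_combination hm
      have hxm : x ∈ ℚ⟮y⟯ := by
        rw [hx']
        exact div_mem hqmem hymem
      refine ⟨hxm, ?_⟩
      have hz' : z = y ^ 2 / x := by
        field_simp
        linear_combination -hrel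
      rw [hz']
      exact div_mem (pow_mem hymem 2) hxm
    · have hz' : z = (q:ℂ) / y := by
        have hm := hconjmul y hy
        rw [h] at hm
        field_simp
        linear_combination hm
      have hzm : z ∈ ℚ⟮y⟯ := by
        rw [hz']
        exact div_mem hqmem hymem
      refine ⟨?_, hzm⟩
      have hx' : x = y ^ 2 / z := by
        field_simp
        linear_combination -hrel
      rw [hx']
      exact div_mem (pow_mem hymem 2) hzm
  have hroots_mem : ∀ r : ℂ, Polynomial.aeval r f = 0 → r ∈ ℚ⟮y⟯ := by
    intro r hr
    by_cases h1 : r = x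
    · rw [h1]; exact hxmem.1
    by_cases h2 : r = y
    · rw [h2]; exact hymem
    by_cases h3 : r = z
    · rw [h3]; exact hxmem.2
    have hcr := hconjroot r hr
    have hcrne : (starRingEnd ℂ) r ≠ r := hconj_ne r hr
    have hcr_in : (starRingEnd ℂ) r = x ∨ (starRingEnd ℂ) r = y ∨ (starRingEnd ℂ) r = z := by
      by_contra hcon
      push_neg at hcon
      obtain ⟨k1, k2, k3⟩ := hcon
      exact hfive x y z r ((starRingEnd ℂ) r) hx hy hz hr hcr
        hxy hxz (Ne.symm h1) (Ne.symm k1) hyz (Ne.symm h2) (Ne.symm k2)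
        (Ne.symm h3) (Ne.symm k3) (Ne.symm hcrne)
    have hrval := hconjval r hr
    rcases hcr_in with h | h | h <;> rw [hrval, h]
    · exact div_mem hqmem hxmem.1
    · exact div_mem hqmem hymem
    · exact div_mem hqmem hxmem.2
  -- finrank contradiction
  have hyint : IsIntegral ℚ y := by
    refine ⟨g, hgmonic, ?_⟩
    rw [← Polynomial.aeval_def]
    exact haev y hy
  haveI : FiniteDimensional ℚ ℚ⟮y⟯ := IntermediateField.adjoin.finiteDimensional hyint
  have hfr : Module.finrank ℚ ℚ⟮y⟯ = 4 := by
    rw [IntermediateField.adjoin.finrank hyint,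
      (minpoly.eq_of_irreducible_of_monic hirr (haev y hy) hgmonic).symm, hgdeg]
  have hsplits : (g.map (algebraMap ℚ ℂ)).Splits := IsAlgClosed.splits (g.map (algebraMap ℚ ℂ))
  haveI hKsf : Polynomial.IsSplittingField ℚ (IntermediateField.adjoin ℚ (g.rootSet ℂ)) g :=
    IntermediateField.adjoin_rootSet_isSplittingField hsplits
  have hKle : IntermediateField.adjoin ℚ (g.rootSet ℂ) ≤ ℚ⟮y⟯ := by
    rw [IntermediateField.adjoin_le_iff]
    intro r hr
    rw [Polynomial.mem_rootSet] at hr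
    apply hroots_mem r
    have h2 := hr.2
    rw [hg, show (Int.castRingHom ℚ) = algebraMap ℤ ℚ from rfl, aeval_map_algebraMap] at h2
    exact h2
  haveI : FiniteDimensional ℚ (IntermediateField.adjoin ℚ (g.rootSet ℂ)) :=
    FiniteDimensional.of_injective (IntermediateField.inclusion hKle).toLinearMap
      (IntermediateField.inclusion hKle).injective
  have hKfr : Module.finrank ℚ (IntermediateField.adjoin ℚ (g.rootSet ℂ)) ≤ 4 := by
    rw [← hfr]
    exact LinearMap.finrank_le_finrank_of_injective
      (f := (IntermediateField.inclusion hKle).toLinearMap)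
      (IntermediateField.inclusion hKle).injective
  obtain ⟨e⟩ := hgal
  have h8 : Fintype.card g.Gal = 8 := by
    rw [Fintype.card_congr e.toEquiv, DihedralGroup.card]
  have hcardfr : Fintype.card g.Gal = Module.finrank ℚ g.SplittingField :=
    by rw [← Nat.card_eq_fintype_card]; exact Polynomial.Gal.card_of_separable hirr.separable
  have hEq : Module.finrank ℚ g.SplittingField =
      Module.finrank ℚ (IntermediateField.adjoin ℚ (g.rootSet ℂ)) :=
    (Polynomial.IsSplittingField.algEquiv (IntermediateField.adjoin ℚ (g.rootSet ℂ)) g).toLinearEquiv.finrank_eq.symm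
  omega
end
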